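/- Let d_1 ≥ ... ≥ d_n > 0, D_i(α) = Σ_{j=1}^i d_j^α, and 0 ≤ α_ℓ < α_h. Then for every index i, D_i(α_h)/D_n(α_h) − D_i(α_ℓ)/D_n(α_ℓ) ≤ ln(d_1/d_n)·(α_h − α_ℓ). -/

import Mathlib

lemma stmt8_aux (x y L l h : ℝ) (hy : 0 < y) (hxy : y ≤ x) (hlh : l < h)
    (hL : Real.log (x / y) ≤ L) :
    x ^ h * y ^ l - y ^ h * x ^ l ≤ L * (h - l) * (x ^ h * y ^ l) := by
  have hx : 0 < x := lt_of_lt_of_le hy hxy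
  set δ := h - l with hδdef
  have hδ : 0 < δ := sub_pos.mpr hlh
  have hxs : x ^ h = x ^ l * x ^ δ := by
    rw [show h = l + δ by rw [hδdef]; ring, Real.rpow_add hx]
  have hys : y ^ h = y ^ l * y ^ δ := by
    rw [show h = l + δ by rw [hδdef]; ring, Real.rpow_add hy]
  have ht : 0 < (y / x) ^ δ := Real.rpow_pos_of_pos (div_pos hy hx) _
  have hlog : Real.log ((y / x) ^ δ) ≤ (y / x) ^ δ - 1 := Real.log_le_sub_one_of_pos ht
  have hlogeq : Real.log ((y / x) ^ δ) = δ * Real.log (y / x) :=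
    Real.log_rpow (div_pos hy hx) δ
  have hlogneg : Real.log (y / x) = - Real.log (x / y) := by
    rw [← Real.log_inv, inv_div]
  have hmul : (y / x) ^ δ * x ^ δ = y ^ δ := by
    rw [← Real.mul_rpow (by positivity) hx.le, div_mul_cancel₀ _ hx.ne']
  have hxδ : 0 < x ^ δ := Real.rpow_pos_of_pos hx _
  have hcore : x ^ δ - y ^ δ ≤ L * δ * x ^ δ := by
    have h1 : 1 - (y / x) ^ δ ≤ δ * Real.log (x / y) := by
      rw [hlogeq, hlogneg] at hlog; linarith
    have h2 : δ * Real.log (x / y) ≤ δ * L := mul_le_mul_of_nonneg_left hL hδ.le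
    calc x ^ δ - y ^ δ = (1 - (y / x) ^ δ) * x ^ δ := by rw [sub_mul, one_mul, hmul]
      _ ≤ (δ * L) * x ^ δ := mul_le_mul_of_nonneg_right (by linarith) hxδ.le
      _ = L * δ * x ^ δ := by ring
  calc x ^ h * y ^ l - y ^ h * x ^ l = (x ^ δ - y ^ δ) * (x ^ l * y ^ l) := by
        rw [hxs, hys]; ring
    _ ≤ (L * δ * x ^ δ) * (x ^ l * y ^ l) :=
        mul_le_mul_of_nonneg_right hcore (by positivity)
    _ = L * δ * (x ^ h * y ^ l) := by rw [hxs]; ring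

/-- For `0 ≤ α_ℓ < α_h`, the increase of the normalized partial sum is at most
`ln(d_1/d_n)·(α_h − α_ℓ)` (0-indexed: `ln (d 0 / d (n-1))`). -/
theorem stmt8 (n : ℕ) (hn : 0 < n) (d : ℕ → ℝ)
    (hpos : ∀ j, j < n → 0 < d j)
    (hsorted : ∀ j k, j ≤ k → k < n → d k ≤ d j)
    (i : ℕ) (hi : i ≤ n) (αl αh : ℝ) (h0 : 0 ≤ αl) (hlh : αl < αh) :
    (∑ j ∈ Finset.range i, d j ^ αh) / (∑ j ∈ Finset.range n, d j ^ αh)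
      - (∑ j ∈ Finset.range i, d j ^ αl) / (∑ j ∈ Finset.range n, d j ^ αl)
      ≤ Real.log (d 0 / d (n - 1)) * (αh - αl) := by
  set L := Real.log (d 0 / d (n - 1)) with hLdef
  have hd0 : 0 < d 0 := hpos 0 hn
  have hdn : 0 < d (n - 1) := hpos _ (by omega)
  have hdle : d (n - 1) ≤ d 0 := hsorted 0 (n - 1) (Nat.zero_le _) (by omega)
  have hL0 : 0 ≤ L := Real.log_nonneg ((le_div_iff₀ hdn).mpr (by linarith))
  have hδ : 0 < αh - αl := sub_pos.mpr hlh
  have hB : 0 < ∑ j ∈ Finset.range n, d j ^ αh :=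
    Finset.sum_pos (fun j hj => Real.rpow_pos_of_pos (hpos j (Finset.mem_range.mp hj)) _)
      ⟨0, Finset.mem_range.mpr hn⟩
  have hE : 0 < ∑ j ∈ Finset.range n, d j ^ αl :=
    Finset.sum_pos (fun j hj => Real.rpow_pos_of_pos (hpos j (Finset.mem_range.mp hj)) _)
      ⟨0, Finset.mem_range.mpr hn⟩
  rw [div_sub_div _ _ hB.ne' hE.ne', div_le_iff₀ (mul_pos hB hE)]
  set f : ℕ → ℕ → ℝ := fun j k => d j ^ αh * d k ^ αl - d k ^ αh * d j ^ αl with hf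
  have hexpand :
      (∑ j ∈ Finset.range i, d j ^ αh) * ∑ j ∈ Finset.range n, d j ^ αl
        - (∑ j ∈ Finset.range n, d j ^ αh) * ∑ j ∈ Finset.range i, d j ^ αl
        = ∑ j ∈ Finset.range i, ∑ k ∈ Finset.range n, f j k := by
    rw [Finset.sum_mul_sum, Finset.sum_mul_sum,
      Finset.sum_comm (s := Finset.range n) (t := Finset.range i), ← Finset.sum_sub_distrib]
    refine Finset.sum_congr rfl fun j _ => ?_
    rw [← Finset.sum_sub_distrib]
  have hsplit : ∀ j, ∑ k ∈ Finset.range n, f j k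
      = ∑ k ∈ Finset.range i, f j k + ∑ k ∈ Finset.Ico i n, f j k := by
    intro j
    rw [Finset.range_eq_Ico, ← Finset.sum_Ico_consecutive _ (Nat.zero_le i) hi,
      ← Finset.range_eq_Ico]
  have hSzero : ∑ j ∈ Finset.range i, ∑ k ∈ Finset.range i, f j k = 0 := by
    have h1 := Finset.sum_comm (s := Finset.range i) (t := Finset.range i) (f := f)
    have h2 : ∑ k ∈ Finset.range i, ∑ j ∈ Finset.range i, f j k
        = - ∑ j ∈ Finset.range i, ∑ k ∈ Finset.range i, f j k := by
      rw [← Finset.sum_neg_distrib]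
      refine Finset.sum_congr rfl fun a _ => ?_
      rw [← Finset.sum_neg_distrib]
      refine Finset.sum_congr rfl fun b _ => ?_
      simp only [hf]; ring
    linarith
  have hT : ∑ j ∈ Finset.range i, ∑ k ∈ Finset.Ico i n, f j k
      ≤ L * (αh - αl) * ((∑ j ∈ Finset.range n, d j ^ αh) * ∑ j ∈ Finset.range n, d j ^ αl) := by
    calc ∑ j ∈ Finset.range i, ∑ k ∈ Finset.Ico i n, f j k
        ≤ ∑ j ∈ Finset.range i, ∑ k ∈ Finset.Ico i n,
            L * (αh - αl) * (d j ^ αh * d k ^ αl) := by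
          refine Finset.sum_le_sum fun j hj => Finset.sum_le_sum fun k hk => ?_
          have hji : j < i := Finset.mem_range.mp hj
          obtain ⟨hik, hkn⟩ := Finset.mem_Ico.mp hk
          have hjk : d k ≤ d j := hsorted j k (by omega) hkn
          have hdk : 0 < d k := hpos k hkn
          have hlogle : Real.log (d j / d k) ≤ L := by
            rw [hLdef]
            apply Real.log_le_log (div_pos (hdk.trans_le hjk) hdk)
            exact div_le_div₀ hd0.le (hsorted 0 j (Nat.zero_le _) (by omega)) hdn
              (hsorted k (n - 1) (by omega) (by omega))
          exact stmt8_aux (d j) (d k) L αl αh hdk hjk hlh hlogle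
      _ = L * (αh - αl) * ((∑ j ∈ Finset.range i, d j ^ αh) * ∑ k ∈ Finset.Ico i n, d k ^ αl) := by
          rw [Finset.sum_mul_sum, Finset.mul_sum]
          exact Finset.sum_congr rfl fun j _ => by rw [Finset.mul_sum]
      _ ≤ L * (αh - αl) * ((∑ j ∈ Finset.range n, d j ^ αh) * ∑ j ∈ Finset.range n, d j ^ αl) := by
          apply mul_le_mul_of_nonneg_left _ (mul_nonneg hL0 hδ.le)
          apply mul_le_mul
          · exact Finset.sum_le_sum_of_subset_of_nonneg (Finset.range_subset_range.mpr hi)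
              fun k hk _ => (Real.rpow_pos_of_pos (hpos k (Finset.mem_range.mp hk)) _).le
          · refine Finset.sum_le_sum_of_subset_of_nonneg ?_
              fun k hk _ => (Real.rpow_pos_of_pos (hpos k (Finset.mem_range.mp hk)) _).le
            intro k hk
            obtain ⟨_, hkn⟩ := Finset.mem_Ico.mp hk
            exact Finset.mem_range.mpr hkn
          · exact Finset.sum_nonneg fun k hk =>
              (Real.rpow_pos_of_pos (hpos k ((Finset.mem_Ico.mp hk).2)) _).le
          · exact hB.le
  calc (∑ j ∈ Finset.range i, d j ^ αh) * ∑ j ∈ Finset.range n, d j ^ αl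
        - (∑ j ∈ Finset.range n, d j ^ αh) * ∑ j ∈ Finset.range i, d j ^ αl
      = ∑ j ∈ Finset.range i, ∑ k ∈ Finset.Ico i n, f j k := by
        rw [hexpand]
        simp only [hsplit, Finset.sum_add_distrib, hSzero, zero_add]
    _ ≤ _ := hT
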